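/- On ℝ³ parametrized by coordinates (ρ, z) with ρ > 0, the function A(ρ,z) = (z+α)/(ρ·R₁) + (z-α)/(ρ·R₂), where R₁ = √(ρ² + (z+α)²) and R₂ = √(ρ² + (z-α)²), satisfies -∂_z A = ∂_ρ (1/R₁ + 1/R₂) wherever R₁, R₂ > 0. -/

import Mathlib

private lemma sqrt_deriv_aux (ρ z c : ℝ) (hρ : 0 < ρ) :
    HasDerivAt (fun z' : ℝ => Real.sqrt (ρ ^ 2 + (z' + c) ^ 2))
      ((z + c) / Real.sqrt (ρ ^ 2 + (z + c) ^ 2)) z := by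
  have hpos : 0 < ρ ^ 2 + (z + c) ^ 2 := by positivity
  have hf : HasDerivAt (fun z' : ℝ => ρ ^ 2 + (z' + c) ^ 2) (2 * (z + c)) z := by
    have h1 : HasDerivAt (fun z' : ℝ => z' + c) 1 z := (hasDerivAt_id z).add_const c
    have := (h1.pow 2).const_add (ρ ^ 2)
    simpa [mul_comm, mul_assoc] using this
  have := hf.sqrt hpos.ne'
  convert this using 1
  have hs : 0 < Real.sqrt (ρ ^ 2 + (z + c) ^ 2) := Real.sqrt_pos.mpr hpos
  field_simp

private lemma zderiv_aux (ρ z c : ℝ) (hρ : 0 < ρ) :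
    HasDerivAt (fun z' : ℝ => (z' + c) / (ρ * Real.sqrt (ρ ^ 2 + (z' + c) ^ 2)))
      (ρ / Real.sqrt (ρ ^ 2 + (z + c) ^ 2) ^ 3) z := by
  have hpos : 0 < ρ ^ 2 + (z + c) ^ 2 := by positivity
  have hs : 0 < Real.sqrt (ρ ^ 2 + (z + c) ^ 2) := Real.sqrt_pos.mpr hpos
  have hsq : Real.sqrt (ρ ^ 2 + (z + c) ^ 2) ^ 2 = ρ ^ 2 + (z + c) ^ 2 :=
    Real.sq_sqrt hpos.le
  have hnum : HasDerivAt (fun z' : ℝ => z' + c) 1 z := (hasDerivAt_id z).add_const c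
  have hden : HasDerivAt (fun z' : ℝ => ρ * Real.sqrt (ρ ^ 2 + (z' + c) ^ 2))
      (ρ * ((z + c) / Real.sqrt (ρ ^ 2 + (z + c) ^ 2))) z :=
    (sqrt_deriv_aux ρ z c hρ).const_mul ρ
  have hden0 : ρ * Real.sqrt (ρ ^ 2 + (z + c) ^ 2) ≠ 0 := by positivity
  have := hnum.div hden hden0
  refine this.congr_deriv ?_
  set s := Real.sqrt (ρ ^ 2 + (z + c) ^ 2)
  field_simp
  linear_combination hsq

private lemma rderiv_aux (ρ z c : ℝ) (hρ : 0 < ρ) :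
    HasDerivAt (fun ρ' : ℝ => 1 / Real.sqrt (ρ' ^ 2 + (z + c) ^ 2))
      (-(ρ / Real.sqrt (ρ ^ 2 + (z + c) ^ 2) ^ 3)) ρ := by
  have hpos : 0 < ρ ^ 2 + (z + c) ^ 2 := by positivity
  have hs : 0 < Real.sqrt (ρ ^ 2 + (z + c) ^ 2) := Real.sqrt_pos.mpr hpos
  have hsq : Real.sqrt (ρ ^ 2 + (z + c) ^ 2) ^ 2 = ρ ^ 2 + (z + c) ^ 2 :=
    Real.sq_sqrt hpos.le
  have hf : HasDerivAt (fun ρ' : ℝ => ρ' ^ 2 + (z + c) ^ 2) (2 * ρ) ρ := by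
    have := ((hasDerivAt_id ρ).pow 2).add_const ((z + c) ^ 2)
    simpa [mul_comm, mul_assoc] using this
  have hsd := hf.sqrt hpos.ne'
  have := ((hasDerivAt_const ρ (1 : ℝ)).div hsd hs.ne')
  refine this.congr_deriv ?_
  set s := Real.sqrt (ρ ^ 2 + (z + c) ^ 2)
  field_simp
  nlinarith [hsq, hs, hρ]

/-- Gibbons-Hawking with two centers at `z = ±α`: the connection coefficient
`A(ρ,z) = (z+α)/(ρR₁) + (z-α)/(ρR₂)` satisfies `-∂_z A = ∂_ρ V`, where
`V = 1/R₁ + 1/R₂`, `R₁ = √(ρ²+(z+α)²)`, `R₂ = √(ρ²+(z-α)²)`, wherever `R₁, R₂ > 0`. -/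
theorem gibbons_hawking_connection (α ρ z : ℝ) (hα : 0 < α) (hρ : 0 < ρ)
    (hR1 : 0 < Real.sqrt (ρ ^ 2 + (z + α) ^ 2))
    (hR2 : 0 < Real.sqrt (ρ ^ 2 + (z - α) ^ 2)) :
    ∃ D : ℝ,
      HasDerivAt (fun z' : ℝ =>
          (z' + α) / (ρ * Real.sqrt (ρ ^ 2 + (z' + α) ^ 2)) +
          (z' - α) / (ρ * Real.sqrt (ρ ^ 2 + (z' - α) ^ 2))) (-D) z ∧
      HasDerivAt (fun ρ' : ℝ =>
          1 / Real.sqrt (ρ' ^ 2 + (z + α) ^ 2) +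
          1 / Real.sqrt (ρ' ^ 2 + (z - α) ^ 2)) D ρ := by
  refine ⟨-(ρ / Real.sqrt (ρ ^ 2 + (z + α) ^ 2) ^ 3)
      + -(ρ / Real.sqrt (ρ ^ 2 + (z - α) ^ 2) ^ 3), ?_, ?_⟩
  · rw [show -(-(ρ / Real.sqrt (ρ ^ 2 + (z + α) ^ 2) ^ 3)
        + -(ρ / Real.sqrt (ρ ^ 2 + (z - α) ^ 2) ^ 3))
        = ρ / Real.sqrt (ρ ^ 2 + (z + α) ^ 2) ^ 3
        + ρ / Real.sqrt (ρ ^ 2 + (z - α) ^ 2) ^ 3 from by ring]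
    have h := (zderiv_aux ρ z α hρ).add (zderiv_aux ρ z (-α) hρ)
    simp only [sub_eq_add_neg]
    exact h
  · exact (rderiv_aux ρ z α hρ).add (by simpa [sub_eq_add_neg] using rderiv_aux ρ z (-α) hρ)
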